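/- Let K ≥ 2, w : Fin K → ℝ≥0 nondecreasing, and p ≥ 0. The map from power splits to rates is a bijection onto the rate-region boundary with full power: if q : Fin K → ℝ≥0 with ∑_j q_j = p and c_j = log(1 + q_j/(∑_{h<j} q_h + w_j)) (denominators positive, i.e., w_j > 0), then R(c) = p where R(c) = ∑_{t=1}^K (w_t − w_{t−1}) e^{∑_{k=t}^K c_k} − w_K with w_0 := 0. -/

import Mathlib

noncomputable def Rtot (K : ℕ) (w c : ℕ → ℝ) : ℝ :=
  (∑ t ∈ Finset.Icc 1 K, (w t - w (t - 1)) * Real.exp (∑ k ∈ Finset.Icc t K, c k)) - w K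

noncomputable def Qsum (q : ℕ → ℝ) (j : ℕ) : ℝ := ∑ h ∈ Finset.Icc 1 j, q h

lemma Qsum_succ (q : ℕ → ℝ) (j : ℕ) : Qsum q (j+1) = Qsum q j + q (j+1) :=
  Finset.sum_Icc_succ_top (a := 1) (b := j) (by omega) q

theorem stmt14 (K : ℕ) (hK : 2 ≤ K) (p : ℝ) (hp : 0 ≤ p) (q w c : ℕ → ℝ)
    (hq : ∀ j ∈ Finset.Icc 1 K, 0 ≤ q j)
    (hsum : ∑ j ∈ Finset.Icc 1 K, q j = p)
    (hw0 : w 0 = 0) (hwpos : ∀ j ∈ Finset.Icc 1 K, 0 < w j)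
    (hmono : ∀ s t : ℕ, s ≤ t → t ≤ K → w s ≤ w t)
    (hc : ∀ j ∈ Finset.Icc 1 K,
      c j = Real.log (1 + q j / ((∑ h ∈ Finset.Icc 1 (j - 1), q h) + w j))) :
    Rtot K w c = p := by
  have hQnn : ∀ j, 0 ≤ Qsum q j → True := fun _ _ => trivial
  have hQnonneg : ∀ j, j ≤ K → 0 ≤ Qsum q j := by
    intro j hj
    apply Finset.sum_nonneg
    intro h hh
    rcases Finset.mem_Icc.mp hh with ⟨h1, h2⟩
    exact hq h (Finset.mem_Icc.mpr ⟨h1, le_trans h2 hj⟩)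
  have key : ∀ d t, 1 ≤ t → t + d = K + 1 →
      ∑ s ∈ Finset.Icc t K, (w s - w (s-1)) * Real.exp (∑ k ∈ Finset.Icc s K, c k)
        = (Qsum q K + w K)
          - (Qsum q (t-1) + w (t-1)) * Real.exp (∑ k ∈ Finset.Icc t K, c k) := by
    intro d
    induction d with
    | zero =>
      intro t ht htK
      have hteq : t = K + 1 := by omega
      subst hteq
      have he : Finset.Icc (K+1) K = (∅ : Finset ℕ) := Finset.Icc_eq_empty (by omega)
      simp [he]
    | succ d ih =>
      intro t ht htK
      have htK' : t ≤ K := by omega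
      have hrec := ih (t+1) (by omega) (by omega)
      simp only [Nat.add_sub_cancel] at hrec
      have hsplit : ∀ f : ℕ → ℝ,
          ∑ s ∈ Finset.Icc t K, f s = f t + ∑ s ∈ Finset.Icc (t+1) K, f s := by
        intro f
        rw [Finset.Icc_eq_cons_Ioc htK', Finset.sum_cons, ← Finset.Icc_add_one_left_eq_Ioc]
      have ht1 : t - 1 + 1 = t := by omega
      have hQt : Qsum q t = Qsum q (t-1) + q t := by
        conv_lhs => rw [← ht1]
        rw [Qsum_succ, ht1]
      have htmem : t ∈ Finset.Icc 1 K := Finset.mem_Icc.mpr ⟨ht, htK'⟩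
      have hD : 0 < Qsum q (t-1) + w t := by
        have := hQnonneg (t-1) (by omega)
        have := hwpos t htmem
        linarith
      have hqt : 0 ≤ q t := hq t htmem
      have hct : Real.exp (c t) = 1 + q t / (Qsum q (t-1) + w t) := by
        rw [hc t htmem]
        exact Real.exp_log (by positivity)
      have hexp : Real.exp (∑ k ∈ Finset.Icc t K, c k)
          = (1 + q t / (Qsum q (t-1) + w t)) * Real.exp (∑ k ∈ Finset.Icc (t+1) K, c k) := by
        rw [hsplit c, Real.exp_add, hct]
      rw [hsplit (fun s => (w s - w (s-1)) * Real.exp (∑ k ∈ Finset.Icc s K, c k)), hrec,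
        hexp, hQt]
      have hDne : (Qsum q (t-1) + w t) ≠ 0 := ne_of_gt hD
      field_simp
      ring
  have hfin := key K 1 le_rfl (by omega)
  have hQ0 : Qsum q 0 = 0 := by simp [Qsum]
  rw [Rtot, hfin, hQ0, hw0]
  simpa [Qsum] using hsum
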